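/- A finite multiset of colored items can be arranged in a linear sequence (packed into a single bin) such that no two adjacent items have the same color if and only if the maximum multiplicity of any color is at most ⌈N/2⌉, where N is the total number of items. -/

import Mathlib

private lemma count_add_count_le {C : Type*} [DecidableEq C] (s : Multiset C) {a b : C}
    (h : a ≠ b) : s.count a + s.count b ≤ Multiset.card s := by
  induction s using Multiset.induction with
  | empty => simp
  | cons x t ih =>
    rw [Multiset.count_cons, Multiset.count_cons, Multiset.card_cons]
    by_cases h1 : a = x <;> by_cases h2 : b = x <;> simp_all <;> omega

private lemma fwd_count {C : Type*} [DecidableEq C] (c : C) :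
    ∀ l : List C, l.Chain' (· ≠ ·) → l.count c ≤ (l.length + 1) / 2
  | [] => fun _ => by simp
  | [a] => fun _ => by
      have := List.count_le_length (a := c) (l := [a])
      simpa using this
  | a :: b :: t => fun h => by
      rw [List.Chain', List.isChain_cons_cons] at h
      have iht := fwd_count c t h.2.tail
      have hab : a ≠ b := h.1
      have hle : (a :: b :: t).count c ≤ t.count c + 1 := by
        rw [List.count_cons, List.count_cons]
        by_cases h1 : a = c <;> by_cases h2 : b = c
        · exact absurd (h1.trans h2.symm) hab
        all_goals simp [h1, h2]
      simp only [List.length_cons]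
      omega

private lemma aux_pack {C : Type*} [DecidableEq C] :
    ∀ n (s : Multiset C) (p : C), Multiset.card s = n →
      (∀ c, c ≠ p → s.count c ≤ (n + 1) / 2) → s.count p ≤ n / 2 →
      ∃ l : List C, (l : Multiset C) = s ∧ (p :: l).Chain' (· ≠ ·) := by
  intro n
  induction n with
  | zero =>
    intro s p hcard _ _
    exact ⟨[], by simpa using (Multiset.card_eq_zero.mp hcard).symm, List.isChain_singleton _⟩
  | succ n ih =>
    intro s p hcard hne hp
    have hex : ∃ x ∈ s, x ≠ p := by
      by_contra h
      push_neg at h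
      have : s.count p = Multiset.card s :=
        Multiset.count_eq_card.mpr (fun b hb => (h b hb).symm)
      omega
    obtain ⟨x0, hx0s, hx0p⟩ := hex
    have hT : (s.toFinset.filter (· ≠ p)).Nonempty :=
      ⟨x0, by simp [Multiset.mem_toFinset, hx0s, hx0p]⟩
    obtain ⟨x, hxT, hxmax⟩ := Finset.exists_max_image _ (fun c => s.count c) hT
    simp only [Finset.mem_filter, Multiset.mem_toFinset] at hxT
    obtain ⟨hxs, hxp⟩ := hxT
    have hcard' : Multiset.card (s.erase x) = n := by
      rw [Multiset.card_erase_of_mem hxs, hcard]; rfl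
    have hxcnt : s.count x ≤ (n + 2) / 2 := hne x hxp
    have h1 : ∀ c, c ≠ x → (s.erase x).count c ≤ (n + 1) / 2 := by
      intro c hcx
      rw [Multiset.count_erase_of_ne hcx]
      by_cases hcp : c = p
      · subst hcp; omega
      · by_cases hcs : c ∈ s
        · have hcx' : s.count c ≤ s.count x := by
            apply hxmax
            simp [Multiset.mem_toFinset, hcs, hcp]
          have := count_add_count_le s hcx
          omega
        · rw [Multiset.count_eq_zero_of_notMem hcs]; omega
    have h2 : (s.erase x).count x ≤ n / 2 := by
      rw [Multiset.count_erase_self]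
      have := Multiset.count_pos.mpr hxs
      omega
    obtain ⟨l, hl, hchain⟩ := ih (s.erase x) x hcard' h1 h2
    refine ⟨x :: l, ?_, ?_⟩
    · show (x ::ₘ (l : Multiset C)) = s
      rw [hl, Multiset.cons_erase hxs]
    · rw [List.Chain', List.isChain_cons_cons]
      exact ⟨Ne.symm hxp, hchain⟩

/-- A finite multiset of colored items can be arranged in a linear sequence with
no two adjacent items of the same color iff the maximum multiplicity of any
color is at most `⌈N/2⌉` (here `(N+1)/2` in `ℕ`), where `N` is the number of items. -/
theorem multiset_chain_iff_count_le {C : Type*} [DecidableEq C] (items : Multiset C) :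
    (∃ l : List C, (l : Multiset C) = items ∧ l.Chain' (· ≠ ·)) ↔
      ∀ c : C, items.count c ≤ (Multiset.card items + 1) / 2 := by
  constructor
  · rintro ⟨l, rfl, hchain⟩ c
    simpa using fwd_count c l hchain
  · intro h
    rcases eq_or_ne items 0 with rfl | hne
    · exact ⟨[], by simp, List.isChain_nil⟩
    · have hns : items.toFinset.Nonempty := by
        rw [Multiset.toFinset_nonempty]
        exact hne
      obtain ⟨x, hxT, hxmax⟩ := Finset.exists_max_image _ (fun c => items.count c) hns
      rw [Multiset.mem_toFinset] at hxT
      have hN : 1 ≤ Multiset.card items := by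
        rw [Nat.one_le_iff_ne_zero]
        simpa [Multiset.card_eq_zero] using hne
      have hcard' : Multiset.card (items.erase x) = Multiset.card items - 1 :=
        Multiset.card_erase_of_mem hxT
      have h1 : ∀ c, c ≠ x → (items.erase x).count c ≤ (Multiset.card items - 1 + 1) / 2 := by
        intro c hcx
        rw [Multiset.count_erase_of_ne hcx]
        by_cases hcs : c ∈ items
        · have hcx' : items.count c ≤ items.count x := by
            apply hxmax; rwa [Multiset.mem_toFinset]
          have := count_add_count_le items hcx
          omega
        · rw [Multiset.count_eq_zero_of_notMem hcs]; omega
      have h2 : (items.erase x).count x ≤ (Multiset.card items - 1) / 2 := by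
        rw [Multiset.count_erase_self]
        have := h x
        have := Multiset.count_pos.mpr hxT
        omega
      obtain ⟨l, hl, hchain⟩ := aux_pack (Multiset.card items - 1) (items.erase x) x
        hcard' h1 h2
      refine ⟨x :: l, ?_, hchain⟩
      show (x ::ₘ (l : Multiset C)) = items
      rw [hl, Multiset.cons_erase hxT]
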